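/- Let S be a set of positive integers and suppose there exists a trigonometric polynomial T(x) = a₀ + Σ_{d∈S∩[1,n]} a_d cos(2πdx) with T(0) = 1 and T(x) ≥ 0 for all x. If A is a set of integers whose difference set A−A contains no element of S∩[1,n], then the upper Banach density of A is at most a₀. -/

import Mathlib

open Finset Filter

private lemma exp_sum_eq (M : ℕ) (hM : 0 < M) (k : ℤ) :
    ∑ j ∈ Finset.range M, Complex.exp (2 * Real.pi * Complex.I * k * j / M)
      = if (M : ℤ) ∣ k then (M : ℂ) else 0 := by
  have hMc : (M : ℂ) ≠ 0 := Nat.cast_ne_zero.2 hM.ne'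
  have hπ : (Real.pi : ℂ) ≠ 0 := Complex.ofReal_ne_zero.2 Real.pi_ne_zero
  set z : ℂ := Complex.exp (2 * Real.pi * Complex.I * k / M) with hz
  have hzj : ∀ j : ℕ, Complex.exp (2 * Real.pi * Complex.I * k * j / M) = z ^ j := by
    intro j
    rw [hz, ← Complex.exp_nat_mul]
    congr 1
    ring
  have hsum : ∑ j ∈ Finset.range M, Complex.exp (2 * Real.pi * Complex.I * k * j / M)
      = ∑ j ∈ Finset.range M, z ^ j := Finset.sum_congr rfl fun j _ => hzj j
  by_cases hdvd : (M : ℤ) ∣ k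
  · obtain ⟨q, hq⟩ := hdvd
    have hz1 : z = 1 := by
      rw [hz]
      have harg : 2 * (Real.pi : ℂ) * Complex.I * (k : ℂ) / M
          = (q : ℂ) * (2 * Real.pi * Complex.I) := by
        have : (k : ℂ) = (M : ℂ) * q := by exact_mod_cast congrArg (Int.cast : ℤ → ℂ) hq
        rw [this]
        field_simp
      rw [harg]
      exact_mod_cast Complex.exp_int_mul_two_pi_mul_I q
    rw [hsum, if_pos ⟨q, hq⟩]
    simp [hz1]
  · have hz1 : z ≠ 1 := by
      rw [hz, Ne, Complex.exp_eq_one_iff]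
      rintro ⟨m, hm⟩
      apply hdvd
      have h2 : (k : ℂ) = (M : ℂ) * m := by
        field_simp at hm
        have hne : (2 * (Real.pi : ℂ) * Complex.I) ≠ 0 := by
          simp [hπ, Complex.I_ne_zero]
        apply mul_left_cancel₀ hne
        linear_combination (2 * (Real.pi : ℂ) * Complex.I) * hm
      exact ⟨m, by exact_mod_cast h2⟩
    have hzM : z ^ M = 1 := by
      rw [hz, ← Complex.exp_nat_mul]
      have harg : (M : ℂ) * (2 * Real.pi * Complex.I * k / M)
          = (k : ℂ) * (2 * Real.pi * Complex.I) := by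
        field_simp
      rw [harg]
      exact_mod_cast Complex.exp_int_mul_two_pi_mul_I k
    rw [hsum, geom_sum_eq hz1, hzM, if_neg hdvd]
    simp

set_option maxHeartbeats 1000000 in
private lemma key_ineq (S : Set ℕ) [DecidablePred (· ∈ S)] (A : Set ℕ) [DecidablePred (· ∈ A)]
    (n : ℕ) (a₀ : ℝ) (a : ℕ → ℝ)
    (hT0 : a₀ + ∑ d ∈ (Finset.Icc 1 n).filter (· ∈ S), a d = 1)
    (hTpos : ∀ x : ℝ,
      0 ≤ a₀ + ∑ d ∈ (Finset.Icc 1 n).filter (· ∈ S),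
        a d * Real.cos (2 * Real.pi * d * x))
    (hA : ∀ x ∈ A, ∀ y ∈ A, ∀ d ∈ S, 1 ≤ d → d ≤ n → x ≠ y + d)
    (M : ℕ) (hM : 0 < M) :
    (((Finset.Icc 1 M).filter (· ∈ A)).card : ℝ) ^ 2
      ≤ a₀ * ((Finset.Icc 1 M).filter (· ∈ A)).card * M
        + (2 * n * ∑ d ∈ (Finset.Icc 1 n).filter (· ∈ S), |a d|) * M := by
  set D := (Finset.Icc 1 n).filter (· ∈ S) with hD
  set K : ℕ := ((Finset.Icc 1 M).filter (· ∈ A)).card with hKdef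
  set M' : ℕ := M + n + 1 with hM'def
  have hM'pos : 0 < M' := by omega
  set c : ℕ → ℝ := fun t => (if t ∈ A then (M : ℝ) else 0) - K with hc
  set χ : ℕ → ℝ := fun t => if t ∈ A then (1 : ℝ) else 0 with hχ
  set e : ℤ → ℂ := fun k => Complex.exp (2 * Real.pi * Complex.I * k / M') with he
  have hG : ∀ k : ℤ, ∑ j ∈ Finset.range M', e (k * j)
      = if (M' : ℤ) ∣ k then (M' : ℂ) else 0 := by
    intro k
    rw [← exp_sum_eq M' hM'pos k]
    refine Finset.sum_congr rfl fun j _ => ?_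
    simp only [he]
    congr 1
    push_cast
    ring
  have hGval : ∀ k : ℤ, |k| < (M' : ℤ) → ∑ j ∈ Finset.range M', e (k * j)
      = if k = 0 then (M' : ℂ) else 0 := by
    intro k hk
    rw [hG k]
    by_cases h0 : k = 0
    · simp [h0]
    · rw [if_neg h0, if_neg]
      intro hdvd
      exact h0 (Int.eq_zero_of_abs_lt_dvd hdvd hk)
  have hemul : ∀ k l : ℤ, e k * e l = e (k + l) := by
    intro k l
    simp only [he, ← Complex.exp_add]
    congr 1
    push_cast
    ring
  have hconj : ∀ k : ℤ, (starRingEnd ℂ) (e k) = e (-k) := by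
    intro k
    simp only [he, ← Complex.exp_conj]
    congr 1
    simp only [map_div₀, map_mul, Complex.conj_I, Complex.conj_ofReal, map_ofNat,
      map_intCast, map_natCast]
    push_cast
    ring
  set f : ℕ → ℂ := fun j => ∑ t ∈ Finset.Icc 1 M, (c t : ℂ) * e (t * j) with hf
  set R : ℕ → ℝ := fun d => ∑ s ∈ Finset.Icc 1 (M - d), c s * c (s + d) with hR
  have hfsq : ∀ j : ℕ, (Complex.normSq (f j) : ℂ)
      = ∑ s ∈ Finset.Icc 1 M, ∑ t ∈ Finset.Icc 1 M,
          (c s : ℂ) * (c t : ℂ) * e (((s : ℤ) - t) * j) := by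
    intro j
    calc (Complex.normSq (f j) : ℂ) = f j * (starRingEnd ℂ) (f j) := (Complex.mul_conj _).symm
      _ = (∑ s ∈ Finset.Icc 1 M, (c s : ℂ) * e (s * j))
          * (∑ t ∈ Finset.Icc 1 M, (c t : ℂ) * e (-((t : ℤ) * j))) := by
          congr 1
          rw [map_sum]
          refine Finset.sum_congr rfl fun t _ => ?_
          rw [map_mul, Complex.conj_ofReal, hconj]
      _ = ∑ s ∈ Finset.Icc 1 M, ∑ t ∈ Finset.Icc 1 M,
            (c s : ℂ) * (c t : ℂ) * e (((s : ℤ) - t) * j) := by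
          rw [Finset.sum_mul_sum]
          refine Finset.sum_congr rfl fun s _ => Finset.sum_congr rfl fun t _ => ?_
          rw [mul_mul_mul_comm, hemul]
          congr 1
          ring
  have hTc : ∀ j : ℕ, ((a₀ + ∑ d ∈ D, a d * Real.cos (2 * Real.pi * d * ((j : ℝ) / M'))) : ℂ)
      = (a₀ : ℂ) + ∑ d ∈ D, (a d : ℂ) * ((e ((d : ℤ) * j) + e (-((d : ℤ) * j))) / 2) := by
    intro j
    push_cast
    congr 1
    refine Finset.sum_congr rfl fun d _ => ?_
    congr 1
    rw [Complex.cos]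
    congr 2
    · congr 1
      push_cast
      ring
    · congr 1
      push_cast
      ring
  have hst : ∀ s ∈ Finset.Icc 1 M, ∀ t ∈ Finset.Icc 1 M,
      ∑ j ∈ Finset.range M',
        ((a₀ : ℂ) + ∑ d ∈ D, (a d : ℂ) * ((e ((d : ℤ) * j) + e (-((d : ℤ) * j))) / 2))
          * e (((s : ℤ) - t) * j)
      = (M' : ℂ) * ((if s = t then (a₀ : ℂ) else 0)
          + ∑ d ∈ D, (a d : ℂ) / 2 *
              ((if t = s + d then 1 else 0) + (if s = t + d then 1 else 0))) := by
    intro s hs t ht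
    obtain ⟨hs1, hs2⟩ := Finset.mem_Icc.mp hs
    obtain ⟨ht1, ht2⟩ := Finset.mem_Icc.mp ht
    have hkabs : |(s : ℤ) - t| < (M' : ℤ) := by
      rw [abs_lt]
      omega
    have expand : ∀ j ∈ Finset.range M',
        ((a₀ : ℂ) + ∑ d ∈ D, (a d : ℂ) * ((e ((d : ℤ) * j) + e (-((d : ℤ) * j))) / 2))
          * e (((s : ℤ) - t) * j)
        = (a₀ : ℂ) * e (((s : ℤ) - t) * j)
          + ∑ d ∈ D, (a d : ℂ) / 2
              * (e (((d : ℤ) + ((s : ℤ) - t)) * j) + e ((((s : ℤ) - t) - d) * j)) := by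
      intro j _
      rw [add_mul, Finset.sum_mul]
      congr 1
      refine Finset.sum_congr rfl fun d _ => ?_
      have h1 : e ((d : ℤ) * j) * e (((s : ℤ) - t) * j)
          = e (((d : ℤ) + ((s : ℤ) - t)) * j) := by rw [hemul]; congr 1; ring
      have h2 : e (-((d : ℤ) * j)) * e (((s : ℤ) - t) * j)
          = e ((((s : ℤ) - t) - d) * j) := by rw [hemul]; congr 1; ring
      calc (a d : ℂ) * ((e ((d : ℤ) * j) + e (-((d : ℤ) * j))) / 2) * e (((s : ℤ) - t) * j)
          = (a d : ℂ) / 2 * (e ((d : ℤ) * j) * e (((s : ℤ) - t) * j)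
              + e (-((d : ℤ) * j)) * e (((s : ℤ) - t) * j)) := by ring
        _ = (a d : ℂ) / 2
              * (e (((d : ℤ) + ((s : ℤ) - t)) * j) + e ((((s : ℤ) - t) - d) * j)) := by
            rw [h1, h2]
    rw [Finset.sum_congr rfl expand, Finset.sum_add_distrib, ← Finset.mul_sum,
      hGval _ hkabs, Finset.sum_comm]
    have hd2 : ∀ d ∈ D,
        ∑ j ∈ Finset.range M', (a d : ℂ) / 2
            * (e (((d : ℤ) + ((s : ℤ) - t)) * j) + e ((((s : ℤ) - t) - d) * j))
        = (a d : ℂ) / 2 * ((if ((d : ℤ) + ((s : ℤ) - t)) = 0 then (M' : ℂ) else 0)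
            + (if (((s : ℤ) - t) - d) = 0 then (M' : ℂ) else 0)) := by
      intro d hd
      obtain ⟨hdI, _⟩ := Finset.mem_filter.mp hd
      obtain ⟨hd1, hdn⟩ := Finset.mem_Icc.mp hdI
      rw [← Finset.mul_sum, Finset.sum_add_distrib,
        hGval _ (by rw [abs_lt]; omega), hGval _ (by rw [abs_lt]; omega)]
    rw [Finset.sum_congr rfl hd2, mul_add, Finset.mul_sum]
    congr 1
    · have c0 : ((s : ℤ) - t = 0) ↔ (s = t) := by omega
      rw [if_congr c0 rfl rfl]
      split_ifs <;> ring
    · refine Finset.sum_congr rfl fun d _ => ?_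
      have c1 : ((d : ℤ) + ((s : ℤ) - t) = 0) ↔ (t = s + d) := by omega
      have c2 : ((((s : ℤ) - t) - d) = 0) ↔ (s = t + d) := by omega
      rw [if_congr c1 rfl rfl, if_congr c2 rfl rfl]
      split_ifs <;> ring
  -- main identity, complex version
  have hQC : ∑ j ∈ Finset.range M',
        ((a₀ + ∑ d ∈ D, a d * Real.cos (2 * Real.pi * d * ((j : ℝ) / M'))) : ℂ)
          * (Complex.normSq (f j) : ℂ)
      = (M' : ℂ) * (∑ t ∈ Finset.Icc 1 M, (a₀ : ℂ) * (c t : ℂ) ^ 2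
          + ∑ d ∈ D, (a d : ℂ) * ∑ s ∈ Finset.Icc 1 (M - d), (c s : ℂ) * (c (s + d) : ℂ)) := by
    have step1 : ∑ j ∈ Finset.range M',
        ((a₀ + ∑ d ∈ D, a d * Real.cos (2 * Real.pi * d * ((j : ℝ) / M'))) : ℂ)
          * (Complex.normSq (f j) : ℂ)
        = ∑ s ∈ Finset.Icc 1 M, ∑ t ∈ Finset.Icc 1 M, (c s : ℂ) * (c t : ℂ)
            * ∑ j ∈ Finset.range M',
              ((a₀ : ℂ) + ∑ d ∈ D, (a d : ℂ) * ((e ((d : ℤ) * j) + e (-((d : ℤ) * j))) / 2))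
                * e (((s : ℤ) - t) * j) := by
      calc ∑ j ∈ Finset.range M',
            ((a₀ + ∑ d ∈ D, a d * Real.cos (2 * Real.pi * d * ((j : ℝ) / M'))) : ℂ)
              * (Complex.normSq (f j) : ℂ)
          = ∑ j ∈ Finset.range M', ∑ s ∈ Finset.Icc 1 M, ∑ t ∈ Finset.Icc 1 M,
              (c s : ℂ) * (c t : ℂ)
              * (((a₀ : ℂ) + ∑ d ∈ D, (a d : ℂ) * ((e ((d : ℤ) * j) + e (-((d : ℤ) * j))) / 2))
                  * e (((s : ℤ) - t) * j)) := by
            refine Finset.sum_congr rfl fun j _ => ?_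
            rw [hTc j, hfsq j, Finset.mul_sum]
            refine Finset.sum_congr rfl fun s _ => ?_
            rw [Finset.mul_sum]
            refine Finset.sum_congr rfl fun t _ => ?_
            ring
        _ = ∑ s ∈ Finset.Icc 1 M, ∑ j ∈ Finset.range M', ∑ t ∈ Finset.Icc 1 M,
              (c s : ℂ) * (c t : ℂ)
              * (((a₀ : ℂ) + ∑ d ∈ D, (a d : ℂ) * ((e ((d : ℤ) * j) + e (-((d : ℤ) * j))) / 2))
                  * e (((s : ℤ) - t) * j)) := Finset.sum_comm
        _ = ∑ s ∈ Finset.Icc 1 M, ∑ t ∈ Finset.Icc 1 M, ∑ j ∈ Finset.range M',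
              (c s : ℂ) * (c t : ℂ)
              * (((a₀ : ℂ) + ∑ d ∈ D, (a d : ℂ) * ((e ((d : ℤ) * j) + e (-((d : ℤ) * j))) / 2))
                  * e (((s : ℤ) - t) * j)) :=
            Finset.sum_congr rfl fun s _ => Finset.sum_comm
        _ = ∑ s ∈ Finset.Icc 1 M, ∑ t ∈ Finset.Icc 1 M, (c s : ℂ) * (c t : ℂ)
              * ∑ j ∈ Finset.range M',
                ((a₀ : ℂ) + ∑ d ∈ D, (a d : ℂ) * ((e ((d : ℤ) * j) + e (-((d : ℤ) * j))) / 2))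
                  * e (((s : ℤ) - t) * j) := by
            refine Finset.sum_congr rfl fun s _ => Finset.sum_congr rfl fun t _ => ?_
            rw [Finset.mul_sum]
    have step2 : ∀ s ∈ Finset.Icc 1 M, ∀ t ∈ Finset.Icc 1 M,
        (c s : ℂ) * (c t : ℂ) * ∑ j ∈ Finset.range M',
            ((a₀ : ℂ) + ∑ d ∈ D, (a d : ℂ) * ((e ((d : ℤ) * j) + e (-((d : ℤ) * j))) / 2))
              * e (((s : ℤ) - t) * j)
        = (M' : ℂ) * ((c s : ℂ) * (c t : ℂ) * (if s = t then (a₀ : ℂ) else 0))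
          + ∑ d ∈ D, (M' : ℂ) * ((c s : ℂ) * (c t : ℂ) * ((a d : ℂ) / 2)
              * ((if t = s + d then 1 else 0) + (if s = t + d then 1 else 0))) := by
      intro s hs t ht
      rw [hst s hs t ht]
      rw [mul_add, mul_add, Finset.mul_sum, Finset.mul_sum]
      congr 1
      · ring
      · refine Finset.sum_congr rfl fun d _ => ?_
        ring
    have inner : ∀ s ∈ Finset.Icc 1 M,
        ∑ t ∈ Finset.Icc 1 M,
          (M' : ℂ) * ((c s : ℂ) * (c t : ℂ) * (if s = t then (a₀ : ℂ) else 0))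
        = (M' : ℂ) * ((a₀ : ℂ) * (c s : ℂ) ^ 2) := by
      intro s hs
      rw [Finset.sum_congr rfl (fun t _ => show
          (M' : ℂ) * ((c s : ℂ) * (c t : ℂ) * (if s = t then (a₀ : ℂ) else 0))
          = (if s = t then (M' : ℂ) * ((a₀ : ℂ) * ((c s : ℂ) * (c t : ℂ))) else 0) by
        split_ifs <;> ring)]
      rw [Finset.sum_ite_eq (Finset.Icc 1 M) s
        (fun t => (M' : ℂ) * ((a₀ : ℂ) * ((c s : ℂ) * (c t : ℂ)))), if_pos hs]
      ring
    have hoff : ∑ s ∈ Finset.Icc 1 M, ∑ t ∈ Finset.Icc 1 M, ∑ d ∈ D,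
          (M' : ℂ) * ((c s : ℂ) * (c t : ℂ) * ((a d : ℂ) / 2)
            * ((if t = s + d then 1 else 0) + (if s = t + d then 1 else 0)))
        = (M' : ℂ) * ∑ d ∈ D, (a d : ℂ)
            * ∑ s ∈ Finset.Icc 1 (M - d), (c s : ℂ) * (c (s + d) : ℂ) := by
      rw [Finset.sum_congr rfl fun s (_ : s ∈ Finset.Icc 1 M) => Finset.sum_comm, Finset.sum_comm]
      rw [Finset.mul_sum]
      refine Finset.sum_congr rfl fun d _ => ?_
      have hsubset : Finset.Icc 1 (M - d) ⊆ Finset.Icc 1 M :=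
        Finset.Icc_subset_Icc_right (Nat.sub_le M d)
      have hmem : ∀ s ∈ Finset.Icc 1 M, (s + d ∈ Finset.Icc 1 M) ↔ (s ∈ Finset.Icc 1 (M - d)) := by
        intro s hs
        simp only [Finset.mem_Icc] at hs ⊢
        omega
      have hptw : ∀ s ∈ Finset.Icc 1 M, ∀ t ∈ Finset.Icc 1 M,
          (M' : ℂ) * ((c s : ℂ) * (c t : ℂ) * ((a d : ℂ) / 2)
            * ((if t = s + d then 1 else 0) + (if s = t + d then 1 else 0)))
          = (if t = s + d then (M' : ℂ) * ((c s : ℂ) * (c t : ℂ) * ((a d : ℂ) / 2)) else 0)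
            + (if s = t + d then (M' : ℂ) * ((c s : ℂ) * (c t : ℂ) * ((a d : ℂ) / 2)) else 0) := by
        intro s _ t _
        split_ifs <;> ring
      rw [Finset.sum_congr rfl fun s hs => Finset.sum_congr rfl (hptw s hs)]
      rw [Finset.sum_congr rfl fun s (_ : s ∈ Finset.Icc 1 M) => Finset.sum_add_distrib,
        Finset.sum_add_distrib]
      have hT1 : ∑ s ∈ Finset.Icc 1 M, ∑ t ∈ Finset.Icc 1 M,
          (if t = s + d then (M' : ℂ) * ((c s : ℂ) * (c t : ℂ) * ((a d : ℂ) / 2)) else 0)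
          = ∑ s ∈ Finset.Icc 1 (M - d),
              (M' : ℂ) * ((c s : ℂ) * (c (s + d) : ℂ) * ((a d : ℂ) / 2)) := by
        rw [Finset.sum_congr rfl fun s (_ : s ∈ Finset.Icc 1 M) => Finset.sum_ite_eq'
          (Finset.Icc 1 M) (s + d)
          (fun t => (M' : ℂ) * ((c s : ℂ) * (c t : ℂ) * ((a d : ℂ) / 2)))]
        rw [Finset.sum_congr rfl fun s hs => if_congr (hmem s hs) rfl rfl]
        rw [Finset.sum_ite_mem, Finset.inter_eq_right.mpr hsubset]
      have hT2 : ∑ s ∈ Finset.Icc 1 M, ∑ t ∈ Finset.Icc 1 M,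
          (if s = t + d then (M' : ℂ) * ((c s : ℂ) * (c t : ℂ) * ((a d : ℂ) / 2)) else 0)
          = ∑ t ∈ Finset.Icc 1 (M - d),
              (M' : ℂ) * ((c (t + d) : ℂ) * (c t : ℂ) * ((a d : ℂ) / 2)) := by
        rw [Finset.sum_comm]
        rw [Finset.sum_congr rfl fun t (_ : t ∈ Finset.Icc 1 M) => Finset.sum_ite_eq'
          (Finset.Icc 1 M) (t + d)
          (fun s => (M' : ℂ) * ((c s : ℂ) * (c t : ℂ) * ((a d : ℂ) / 2)))]
        rw [Finset.sum_congr rfl fun t ht => if_congr (hmem t ht) rfl rfl]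
        rw [Finset.sum_ite_mem, Finset.inter_eq_right.mpr hsubset]
      rw [hT1, hT2, ← Finset.sum_add_distrib, Finset.mul_sum, Finset.mul_sum]
      refine Finset.sum_congr rfl fun s _ => ?_
      ring
    rw [step1, Finset.sum_congr rfl fun s hs => Finset.sum_congr rfl (step2 s hs),
      Finset.sum_congr rfl fun s (_ : s ∈ Finset.Icc 1 M) => Finset.sum_add_distrib,
      Finset.sum_add_distrib, Finset.sum_congr rfl inner, hoff, ← Finset.mul_sum, ← mul_add]
  -- real version
  have hQ : ∑ j ∈ Finset.range M',
        (a₀ + ∑ d ∈ D, a d * Real.cos (2 * Real.pi * d * ((j : ℝ) / M')))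
          * Complex.normSq (f j)
      = M' * (∑ t ∈ Finset.Icc 1 M, a₀ * c t ^ 2 + ∑ d ∈ D, a d * R d) := by
    apply Complex.ofReal_injective
    simp only [hR]
    push_cast
    push_cast at hQC
    convert hQC using 2
  have hQpos : 0 ≤ ∑ j ∈ Finset.range M',
      (a₀ + ∑ d ∈ D, a d * Real.cos (2 * Real.pi * d * ((j : ℝ) / M')))
        * Complex.normSq (f j) :=
    Finset.sum_nonneg fun j _ => mul_nonneg (hTpos _) (Complex.normSq_nonneg _)
  -- arithmetic consequences
  have hKM : (K : ℝ) ≤ M := by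
    have h1 : K ≤ (Finset.Icc 1 M).card := Finset.card_filter_le _ _
    rw [Nat.card_Icc] at h1
    have h2 : K ≤ M := le_trans h1 (le_of_eq (by omega))
    exact_mod_cast h2
  have hKnn : (0 : ℝ) ≤ K := Nat.cast_nonneg K
  have hchi : ∑ t ∈ Finset.Icc 1 M, χ t = K := by
    rw [hχ, Finset.sum_boole, hKdef]
  have hsumc2 : ∑ t ∈ Finset.Icc 1 M, a₀ * c t ^ 2 = a₀ * (K * M ^ 2 - M * K ^ 2) := by
    have hpt : ∀ t, c t ^ 2 = ((M : ℝ) ^ 2 - 2 * M * K) * χ t + K ^ 2 := by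
      intro t
      by_cases h : t ∈ A <;> simp [hc, hχ, h] <;> ring
    have : ∑ t ∈ Finset.Icc 1 M, c t ^ 2 = K * M ^ 2 - M * K ^ 2 := by
      rw [Finset.sum_congr rfl fun t _ => hpt t, Finset.sum_add_distrib,
        ← Finset.mul_sum, hchi, Finset.sum_const, Nat.card_Icc]
      simp only [Nat.add_sub_cancel, nsmul_eq_mul]
      ring
    rw [← Finset.mul_sum, this]
  -- bounds on R d
  have hRbound : ∀ d ∈ D, |R d + M * K ^ 2| ≤ 2 * n * M ^ 2 := by
    intro d hd
    obtain ⟨hdI, hdS⟩ := Finset.mem_filter.mp hd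
    obtain ⟨hd1, hdn⟩ := Finset.mem_Icc.mp hdI
    have hpt : ∀ s ∈ Finset.Icc 1 (M - d), c s * c (s + d)
        = K ^ 2 - M * K * (χ s + χ (s + d)) := by
      intro s _
      by_cases h1 : s ∈ A
      · by_cases h2 : s + d ∈ A
        · exact ((hA (s + d) h2 s h1 d hdS hd1 hdn) rfl).elim
        · simp [hc, hχ, h1, h2]
          ring
      · by_cases h2 : s + d ∈ A <;> simp [hc, hχ, h1, h2] <;> ring
    have hRe : R d = K ^ 2 * ((M - d : ℕ) : ℝ)
        - M * K * ((∑ s ∈ Finset.Icc 1 (M - d), χ s)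
            + (∑ s ∈ Finset.Icc 1 (M - d), χ (s + d))) := by
      rw [hR]
      simp only
      rw [Finset.sum_congr rfl hpt]
      rw [Finset.sum_sub_distrib, Finset.sum_const, Nat.card_Icc, ← Finset.mul_sum,
        Finset.sum_add_distrib]
      simp only [Nat.add_sub_cancel, nsmul_eq_mul]
      ring
    -- generic bound on partial chi sums
    have hgen : ∀ E : Finset ℕ, E ⊆ Finset.Icc 1 M → M ≤ E.card + d →
        ((K : ℝ) - d ≤ ∑ t ∈ E, χ t ∧ ∑ t ∈ E, χ t ≤ K) := by
      intro E hsub hcardE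
      have hsplit : ∑ t ∈ Finset.Icc 1 M \ E, χ t + ∑ t ∈ E, χ t
          = ∑ t ∈ Finset.Icc 1 M, χ t := Finset.sum_sdiff hsub
      have hnn : (0 : ℝ) ≤ ∑ t ∈ Finset.Icc 1 M \ E, χ t :=
        Finset.sum_nonneg fun t _ => by
          by_cases h : t ∈ A <;> simp [hχ, h]
      have hle1 : ∑ t ∈ Finset.Icc 1 M \ E, χ t ≤ ((Finset.Icc 1 M \ E).card : ℝ) := by
        calc ∑ t ∈ Finset.Icc 1 M \ E, χ t ≤ ∑ _t ∈ Finset.Icc 1 M \ E, (1 : ℝ) :=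
            Finset.sum_le_sum fun t _ => by
              by_cases h : t ∈ A <;> simp [hχ, h]
          _ = ((Finset.Icc 1 M \ E).card : ℝ) := by
            rw [Finset.sum_const, nsmul_eq_mul, mul_one]
      have hcard2 : ((Finset.Icc 1 M \ E).card : ℝ) ≤ d := by
        rw [Finset.card_sdiff_of_subset hsub]
        have : (Finset.Icc 1 M).card - E.card ≤ d := by
          rw [Nat.card_Icc]
          have := Finset.card_le_card hsub
          rw [Nat.card_Icc] at this
          omega
        exact_mod_cast this
      constructor
      · rw [← hchi, ← hsplit]
        linarith
      · rw [← hchi, ← hsplit]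
        linarith
    have hU := hgen (Finset.Icc 1 (M - d)) (Finset.Icc_subset_Icc_right (Nat.sub_le M d))
      (by rw [Nat.card_Icc]; omega)
    have hinj : Function.Injective (· + d) := add_left_injective d
    have hVeq : ∑ s ∈ Finset.Icc 1 (M - d), χ (s + d)
        = ∑ t ∈ (Finset.Icc 1 (M - d)).image (· + d), χ t := by
      rw [Finset.sum_image fun x _ y _ h => hinj h]
    have himgsub : (Finset.Icc 1 (M - d)).image (· + d) ⊆ Finset.Icc 1 M := by
      intro t ht
      obtain ⟨s, hs, rfl⟩ := Finset.mem_image.mp ht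
      simp only [Finset.mem_Icc] at hs ⊢
      omega
    have himgcard : M ≤ ((Finset.Icc 1 (M - d)).image (· + d)).card + d := by
      rw [Finset.card_image_of_injective _ hinj, Nat.card_Icc]
      omega
    have hV' := hgen _ himgsub himgcard
    have hV : (K : ℝ) - d ≤ ∑ s ∈ Finset.Icc 1 (M - d), χ (s + d)
        ∧ ∑ s ∈ Finset.Icc 1 (M - d), χ (s + d) ≤ K := by
      rw [hVeq]
      exact hV'
    have hμ1 : ((M - d : ℕ) : ℝ) ≤ M := by exact_mod_cast Nat.sub_le M d
    have hμ2 : (M : ℝ) ≤ ((M - d : ℕ) : ℝ) + d := by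
      have : M ≤ (M - d) + d := by omega
      exact_mod_cast this
    have hdn' : (d : ℝ) ≤ n := by exact_mod_cast hdn
    have hd1' : (1 : ℝ) ≤ d := by exact_mod_cast hd1
    have hMn : (0 : ℝ) ≤ M := Nat.cast_nonneg M
    have hMK : (0 : ℝ) ≤ M * K := mul_nonneg hMn hKnn
    have hKsq : (0 : ℝ) ≤ (K : ℝ) ^ 2 := sq_nonneg _
    have hKsqM : (K : ℝ) ^ 2 ≤ (M : ℝ) ^ 2 := by
      have := pow_le_pow_left₀ hKnn hKM 2
      simpa using this
    have h1 : (K : ℝ) ^ 2 * ((M - d : ℕ) : ℝ) ≤ (K : ℝ) ^ 2 * M :=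
      mul_le_mul_of_nonneg_left hμ1 hKsq
    have h2 : (M : ℝ) * K * (2 * K - 2 * d)
        ≤ (M : ℝ) * K * ((∑ s ∈ Finset.Icc 1 (M - d), χ s)
            + (∑ s ∈ Finset.Icc 1 (M - d), χ (s + d))) :=
      mul_le_mul_of_nonneg_left (by linarith [hU.1, hV.1]) hMK
    have h3 : (M : ℝ) * K * d ≤ (M : ℝ) * M * n := by
      have hMKM : (M : ℝ) * K ≤ M * M := mul_le_mul_of_nonneg_left hKM hMn
      have hd0 : (0 : ℝ) ≤ d := by positivity
      calc (M : ℝ) * K * d ≤ (M : ℝ) * M * d := mul_le_mul_of_nonneg_right hMKM hd0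
        _ ≤ (M : ℝ) * M * n := mul_le_mul_of_nonneg_left hdn' (by positivity)
    have g1 : (M : ℝ) * K * ((∑ s ∈ Finset.Icc 1 (M - d), χ s)
            + (∑ s ∈ Finset.Icc 1 (M - d), χ (s + d)))
        ≤ (M : ℝ) * K * (2 * K) :=
      mul_le_mul_of_nonneg_left (by linarith [hU.2, hV.2]) hMK
    have g2 : (K : ℝ) ^ 2 * ((M : ℝ) - d) ≤ (K : ℝ) ^ 2 * ((M - d : ℕ) : ℝ) :=
      mul_le_mul_of_nonneg_left (by linarith [hμ2]) hKsq
    have g3 : (K : ℝ) ^ 2 * d ≤ (M : ℝ) ^ 2 * n := by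
      have hd0 : (0 : ℝ) ≤ d := by positivity
      calc (K : ℝ) ^ 2 * d ≤ (M : ℝ) ^ 2 * d := mul_le_mul_of_nonneg_right hKsqM hd0
        _ ≤ (M : ℝ) ^ 2 * n := mul_le_mul_of_nonneg_left hdn' (by positivity)
    have hnM : (0 : ℝ) ≤ (M : ℝ) ^ 2 * n := by positivity
    rw [hRe, abs_le]
    constructor
    · linarith [g1, g2, g3, hnM]
    · linarith [h1, h2, h3]
  -- combine everything
  have hM'r : (0 : ℝ) < M' := by exact_mod_cast hM'pos
  have hX : 0 ≤ ∑ t ∈ Finset.Icc 1 M, a₀ * c t ^ 2 + ∑ d ∈ D, a d * R d := by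
    rw [hQ] at hQpos
    exact le_of_mul_le_mul_left (by linarith [hQpos]) hM'r
  have hsuma : ∑ d ∈ D, a d = 1 - a₀ := by linarith [hT0]
  have hstep : ∑ d ∈ D, a d * R d
      ≤ 2 * n * M ^ 2 * (∑ d ∈ D, |a d|) - M * K ^ 2 * (1 - a₀) := by
    have h1 : ∀ d ∈ D, a d * R d ≤ |a d| * (2 * n * M ^ 2) - a d * (M * K ^ 2) := by
      intro d hd
      have h2 := hRbound d hd
      have h3 : a d * (R d + M * K ^ 2) ≤ |a d| * (2 * n * M ^ 2) := by
        calc a d * (R d + M * K ^ 2) ≤ |a d * (R d + M * K ^ 2)| := le_abs_self _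
          _ = |a d| * |R d + M * K ^ 2| := abs_mul _ _
          _ ≤ |a d| * (2 * n * M ^ 2) := mul_le_mul_of_nonneg_left h2 (abs_nonneg _)
      linarith [h3]
    calc ∑ d ∈ D, a d * R d ≤ ∑ d ∈ D, (|a d| * (2 * n * M ^ 2) - a d * (M * K ^ 2)) :=
        Finset.sum_le_sum h1
      _ = 2 * n * M ^ 2 * (∑ d ∈ D, |a d|) - M * K ^ 2 * (1 - a₀) := by
          rw [Finset.sum_sub_distrib, ← Finset.sum_mul, ← Finset.sum_mul, hsuma]
          ring
  have hMr : (0 : ℝ) < M := by exact_mod_cast hM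
  have hfin : M * K ^ 2 ≤ a₀ * K * M ^ 2 + 2 * n * (∑ d ∈ D, |a d|) * M ^ 2 := by
    rw [hsumc2] at hX
    linarith [hX, hstep]
  have hcancel : (M : ℝ) * ((K : ℝ) ^ 2)
      ≤ (M : ℝ) * (a₀ * K * M + (2 * n * ∑ d ∈ D, |a d|) * M) := by linarith [hfin]
  exact le_of_mul_le_mul_left hcancel hMr

private lemma a0_nonneg (S : Set ℕ) [DecidablePred (· ∈ S)]
    (n : ℕ) (a₀ : ℝ) (a : ℕ → ℝ)
    (hTpos : ∀ x : ℝ,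
      0 ≤ a₀ + ∑ d ∈ (Finset.Icc 1 n).filter (· ∈ S),
        a d * Real.cos (2 * Real.pi * d * x)) :
    0 ≤ a₀ := by
  set D := (Finset.Icc 1 n).filter (· ∈ S) with hD
  set M' : ℕ := n + 1 with hM'def
  have hM'pos : 0 < M' := by omega
  have hcos : ∀ d ∈ D, ∑ j ∈ Finset.range M',
      Real.cos (2 * Real.pi * d * ((j : ℝ) / M')) = 0 := by
    intro d hd
    obtain ⟨hdI, _⟩ := Finset.mem_filter.mp hd
    obtain ⟨hd1, hdn⟩ := Finset.mem_Icc.mp hdI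
    have h1 : ∀ j : ℕ, Real.cos (2 * Real.pi * d * ((j : ℝ) / M'))
        = (Complex.exp (2 * Real.pi * Complex.I * ((d : ℤ) : ℂ) * j / M')).re := by
      intro j
      rw [← Complex.exp_ofReal_mul_I_re]
      congr 2
      push_cast
      ring
    rw [Finset.sum_congr rfl fun j _ => h1 j, ← Complex.re_sum,
      exp_sum_eq M' hM'pos (d : ℤ), if_neg, Complex.zero_re]
    intro hdvd
    have h2 := Int.le_of_dvd (by exact_mod_cast hd1) hdvd
    omega
  have hsum := Finset.sum_nonneg fun j (_ : j ∈ Finset.range M') => hTpos ((j : ℝ) / M')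
  rw [Finset.sum_add_distrib, Finset.sum_const, Finset.card_range] at hsum
  have h2 : ∑ j ∈ Finset.range M', ∑ d ∈ D,
      a d * Real.cos (2 * Real.pi * d * ((j : ℝ) / M')) = 0 := by
    rw [Finset.sum_comm]
    refine Finset.sum_eq_zero fun d hd => ?_
    rw [← Finset.mul_sum, hcos d hd, mul_zero]
  rw [h2, add_zero, nsmul_eq_mul] at hsum
  have hM'r : (0 : ℝ) < M' := by exact_mod_cast hM'pos
  exact le_of_mul_le_mul_left (by linarith [hsum]) hM'r


/-- Ruzsa's inequality: if T(x) = a₀ + Σ_{d∈S∩[1,n]} a_d cos(2πdx) is nonnegative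
with T(0) = 1, and A − A avoids S∩[1,n], then the upper density of A is ≤ a₀. -/
theorem density_le_a0 (S : Set ℕ) [DecidablePred (· ∈ S)]
    (A : Set ℕ) [DecidablePred (· ∈ A)]
    (n : ℕ) (a₀ : ℝ) (a : ℕ → ℝ)
    (hT0 : a₀ + ∑ d ∈ (Finset.Icc 1 n).filter (· ∈ S), a d = 1)
    (hTpos : ∀ x : ℝ,
      0 ≤ a₀ + ∑ d ∈ (Finset.Icc 1 n).filter (· ∈ S),
        a d * Real.cos (2 * Real.pi * d * x))
    (hA : ∀ x ∈ A, ∀ y ∈ A, ∀ d ∈ S, 1 ≤ d → d ≤ n → x ≠ y + d) :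
    Filter.limsup
      (fun N : ℕ => (((Finset.Icc 1 N).filter (· ∈ A)).card : ℝ) / N)
      Filter.atTop ≤ a₀ := by
  have ha0 : 0 ≤ a₀ := a0_nonneg S n a₀ a hTpos
  set Sa : ℝ := ∑ d ∈ (Finset.Icc 1 n).filter (· ∈ S), |a d| with hSa
  have hSa0 : 0 ≤ Sa := Finset.sum_nonneg fun d _ => abs_nonneg _
  set C : ℝ := 2 * n * Sa with hC
  have hC0 : 0 ≤ C := by positivity
  set u : ℕ → ℝ := fun N => (((Finset.Icc 1 N).filter (· ∈ A)).card : ℝ) / N with hu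
  have hu0 : ∀ N, 0 ≤ u N := fun N => by
    rw [hu]
    positivity
  have hukey : ∀ N : ℕ, 0 < N → u N ^ 2 ≤ a₀ * u N + C / N := by
    intro N hN
    have h := key_ineq S A n a₀ a hT0 hTpos hA N hN
    have hNr : (0 : ℝ) < N := by exact_mod_cast hN
    rw [← hSa, ← hC] at h
    calc u N ^ 2 = (((Finset.Icc 1 N).filter (· ∈ A)).card : ℝ) ^ 2 / (N : ℝ) ^ 2 := by
          rw [hu]; rw [div_pow]
      _ ≤ (a₀ * ((Finset.Icc 1 N).filter (· ∈ A)).card * N + C * N) / (N : ℝ) ^ 2 := by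
          apply div_le_div_of_nonneg_right h (by positivity) |>.trans_eq rfl
      _ = a₀ * u N + C / N := by
          rw [hu]
          field_simp
  have hev : ∀ ε : ℝ, 0 < ε → ∀ᶠ N : ℕ in Filter.atTop, u N ≤ a₀ + ε := by
    intro ε hε
    obtain ⟨N₀, hN₀⟩ := exists_nat_ge (2 * C / ε ^ 2)
    filter_upwards [Filter.eventually_ge_atTop (max N₀ 1)] with N hN
    have hN1 : 1 ≤ N := le_trans (le_max_right _ _) hN
    have hNr : (0 : ℝ) < N := by exact_mod_cast hN1
    have hNN0 : (N₀ : ℝ) ≤ N := by exact_mod_cast le_trans (le_max_left _ _) hN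
    have hCN : C / N ≤ ε ^ 2 / 2 := by
      rw [div_le_div_iff₀ hNr (by norm_num)]
      have h1 : 2 * C / ε ^ 2 ≤ (N : ℝ) := le_trans hN₀ hNN0
      rw [div_le_iff₀ (by positivity)] at h1
      nlinarith [h1]
    have hk := hukey N hN1
    by_contra hcon
    push_neg at hcon
    have hupos : 0 < u N := lt_of_le_of_lt (by positivity) hcon
    have hp1 := mul_lt_mul_of_pos_right hcon hupos
    have hp2 := mul_lt_mul_of_pos_left hcon hε
    have hε2 : 0 < ε ^ 2 := by positivity
    nlinarith [hk, hCN, hp1, hp2, mul_nonneg hε.le ha0, hε2]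
  have hbdd : Filter.IsBoundedUnder (· ≥ ·) Filter.atTop u :=
    Filter.isBoundedUnder_of ⟨0, fun N => hu0 N⟩
  have hcob : Filter.IsCoboundedUnder (· ≤ ·) Filter.atTop u :=
    hbdd.isCoboundedUnder_le
  have hls : ∀ ε : ℝ, 0 < ε → Filter.limsup u Filter.atTop ≤ a₀ + ε := fun ε hε =>
    Filter.limsup_le_of_le hcob (hev ε hε)
  exact le_of_forall_pos_le_add fun ε hε => hls ε hε
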